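/- Let k > m ≥ 1 with k even and gcd(2(2m+1), 2k+1) = 1. Then the set I_{21} = { s ∈ {1,…,m} : s = (2n(2m+1) - (k-m))/(2k+1) for some n ∈ {1,…,k/2} } equals {m}. -/
import Mathlib


theorem stmt_9 (k m : ℤ) (hm : 1 ≤ m) (hk : m < k) (hke : Even k)
    (hgcd : Int.gcd (2*(2*m+1)) (2*k+1) = 1) :
    {s : ℤ | 1 ≤ s ∧ s ≤ m ∧ ∃ n : ℤ, 1 ≤ n ∧ n ≤ k/2 ∧
      s*(2*k+1) = 2*n*(2*m+1) - (k-m)} = {m} := by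
  obtain ⟨t, ht⟩ := hke
  have ht2 : k = 2 * t := by linarith
  have htk : k / 2 = t := by omega
  ext s
  simp only [Set.mem_setOf_eq, Set.mem_singleton_iff]
  constructor
  · rintro ⟨hs1, hs2, n, hn1, hn2, heq⟩
    have hcop : IsCoprime ((2:ℤ)*m+1) (2*k+1) := by
      have := Int.isCoprime_iff_gcd_eq_one.mpr hgcd
      exact (IsCoprime.of_mul_left_right (by rwa [mul_comm] at this ⊢))
    have hdvd : (2*m+1) ∣ (2*s+1) * (2*k+1) := ⟨4*n+1, by linear_combination 2*heq⟩
    have hdvd2 : (2*m+1) ∣ (2*s+1) := hcop.dvd_of_dvd_mul_right hdvd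
    have hle : 2*m+1 ≤ 2*s+1 := Int.le_of_dvd (by linarith) hdvd2
    linarith
  · rintro rfl
    exact ⟨hm, le_refl s, t, by omega, by omega, by linear_combination (2*s+1)*ht2⟩
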